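/- Let E_1, …, E_C be positive semidefinite D×D complex matrices with Σ_i E_i = I and E_i = E_iᵀ for each i (so each E_i is real symmetric). Then there exist an integer D' ≥ D and projections Q_1, …, Q_C on ℂ^{D'} such that: each Q_i satisfies Q_i = Q_i† = Q_iᵀ (real symmetric), Q_i Q_j = 0 for i ≠ j, Σ_i Q_i = I_{D'}, and for all indices a, b ≤ D (with ℂ^D embedded as the first D coordinates of ℂ^{D'}), the (a,b) entry of Q_i equals the (a,b) entry of E_i. -/

import Mathlib

open scoped Matrix ComplexOrder

theorem stmt12 {D C : ℕ} (E : Fin C → Matrix (Fin D) (Fin D) ℂ)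
    (hEpsd : ∀ i, (E i).PosSemidef) (hEsum : ∑ i, E i = 1)
    (hEsymm : ∀ i, (E i)ᵀ = E i) :
    ∃ (D' : ℕ) (hDD' : D ≤ D') (Q : Fin C → Matrix (Fin D') (Fin D') ℂ),
      (∀ i, (Q i)ᴴ = Q i) ∧ (∀ i, (Q i)ᵀ = Q i) ∧ (∀ i, Q i * Q i = Q i) ∧
      (∀ i j, i ≠ j → Q i * Q j = 0) ∧ (∑ i, Q i = 1) ∧
      (∀ (i : Fin C) (a b : Fin D),
        Q i (Fin.castLE hDD' a) (Fin.castLE hDD' b) = E i a b) := by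
  rcases Nat.eq_zero_or_pos C with hC | hC
  · -- C = 0 forces D = 0
    subst hC
    have hD : D = 0 := by
      by_contra hD
      have : (∑ i : Fin 0, E i) = 0 := by simp
      rw [hEsum] at this
      have hD' : 0 < D := Nat.pos_of_ne_zero hD
      have := congrFun (congrFun this ⟨0, hD'⟩) ⟨0, hD'⟩
      simp [Matrix.one_apply] at this
    subst hD
    exact ⟨0, le_refl 0, fun i => i.elim0, fun i => i.elim0, fun i => i.elim0,
      fun i => i.elim0, fun i j _ => i.elim0, Subsingleton.elim _ _, fun i => i.elim0⟩
  -- main case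
  set N := C * D with hN
  have hDN : D ≤ N := Nat.le_mul_of_pos_left D hC
  -- square roots
  open scoped MatrixOrder in
  set S : Fin C → Matrix (Fin D) (Fin D) ℂ := fun i => CFC.sqrt (E i) with hSdef
  open scoped MatrixOrder in
  have hSpsd : ∀ i, (S i).PosSemidef := fun i => Matrix.nonneg_iff_posSemidef.mp (CFC.sqrt_nonneg (E i))
  open scoped MatrixOrder in
  have hSmul : ∀ i, S i * S i = E i := fun i => CFC.sqrt_mul_sqrt_self (E i) (hEpsd i).nonneg
  have hSsymm : ∀ i, (S i)ᵀ = S i := by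
    intro i
    have h1 : ((S i)ᵀ).PosSemidef := (hSpsd i).transpose
    have h2 : (S i)ᵀ ^ 2 = E i := by
      rw [pow_two, ← Matrix.transpose_mul, hSmul, hEsymm]
    open scoped MatrixOrder in
    exact ((CFC.sqrt_eq_iff _ _ (hEpsd i).nonneg h1.nonneg).mpr (by rw [← pow_two]; exact h2)).symm
  have hSreal : ∀ i j a, ((S i j a).re : ℂ) = S i j a := by
    intro i j a
    rw [← Complex.conj_eq_iff_re]
    have h1 : (S i)ᴴ = S i := (hSpsd i).1
    calc (starRingEnd ℂ) (S i j a) = (S i)ᴴ a j := rfl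
      _ = S i a j := by rw [h1]
      _ = (S i)ᵀ j a := rfl
      _ = S i j a := by rw [hSsymm]
  -- the key sum identity
  have hkey : ∀ (i : Fin C) (a b : Fin D),
      ((∑ j, (S i j a).re * (S i j b).re : ℝ) : ℂ) = E i a b := by
    intro i a b
    push_cast
    calc (∑ j, ((S i j a).re : ℂ) * ((S i j b).re : ℂ))
        = ∑ j, S i j a * S i j b := by
          refine Finset.sum_congr rfl fun j _ => ?_
          rw [hSreal, hSreal]
      _ = ∑ j, (S i)ᵀ a j * S i j b := rfl
      _ = ((S i)ᵀ * S i) a b := (Matrix.mul_apply).symm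
      _ = E i a b := by rw [hSsymm, hSmul]
  -- the isometry columns
  set e : Fin C × Fin D ≃ Fin N := finProdFinEquiv with he
  set v : Fin D → EuclideanSpace ℝ (Fin N) :=
    fun a => WithLp.toLp 2 (fun s => (S (e.symm s).1 (e.symm s).2 a).re) with hv
  have hsum2 : ∀ a b : Fin D, (∑ s : Fin N, v a s * v b s) = if a = b then 1 else 0 := by
    intro a b
    have h1 : (∑ s : Fin N, v a s * v b s)
        = ∑ p : Fin C × Fin D, (S p.1 p.2 a).re * (S p.1 p.2 b).re := by
      rw [← Equiv.sum_comp e]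
      simp [hv]
    have h2 : ((∑ p : Fin C × Fin D, (S p.1 p.2 a).re * (S p.1 p.2 b).re : ℝ) : ℂ)
        = ((if a = b then 1 else 0 : ℝ) : ℂ) := by
      rw [Complex.ofReal_sum, Fintype.sum_prod_type]
      calc ∑ i : Fin C, ∑ j, (((S i j a).re * (S i j b).re : ℝ) : ℂ)
          = ∑ i : Fin C, ((∑ j, (S i j a).re * (S i j b).re : ℝ) : ℂ) := by
            refine Finset.sum_congr rfl fun i _ => ?_
            rw [Complex.ofReal_sum]
        _ = ∑ i : Fin C, E i a b := Finset.sum_congr rfl fun i _ => hkey i a b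
        _ = (∑ i, E i) a b := by rw [Matrix.sum_apply]
        _ = (1 : Matrix (Fin D) (Fin D) ℂ) a b := by rw [hEsum]
        _ = _ := by rw [Matrix.one_apply]; split_ifs <;> simp
    rw [h1]
    exact_mod_cast h2
  -- extend to orthonormal basis
  set vf : Fin N → EuclideanSpace ℝ (Fin N) :=
    fun t => if h : (t : ℕ) < D then v ⟨t, h⟩ else 0 with hvf
  have hon : Orthonormal ℝ (Set.restrict {t : Fin N | (t : ℕ) < D} vf) := by
    rw [orthonormal_iff_ite]
    rintro ⟨t, ht⟩ ⟨t', ht'⟩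
    simp only [Set.mem_setOf_eq] at ht ht'
    have h1 : vf t = v ⟨t, ht⟩ := by simp only [hvf]; exact dif_pos ht
    have h2 : vf t' = v ⟨t', ht'⟩ := by simp only [hvf]; exact dif_pos ht'
    change inner ℝ (vf t) (vf t') = _
    rw [h1, h2]
    rw [PiLp.inner_apply]
    simp only [RCLike.inner_apply, starRingEnd_apply, star_trivial]
    rw [hsum2]
    simp [Fin.ext_iff, Subtype.ext_iff]
    exact if_congr eq_comm rfl rfl
  obtain ⟨b, hb⟩ := hon.exists_orthonormalBasis_extension_of_card_eq (by simp)
  -- the orthogonal matrix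
  set W : Matrix (Fin N) (Fin N) ℝ := fun s t => b t s with hW
  have hWtW : Wᵀ * W = 1 := by
    ext t t'
    rw [Matrix.mul_apply, Matrix.one_apply]
    have := orthonormal_iff_ite.mp b.orthonormal t t'
    rw [PiLp.inner_apply] at this
    simp at this
    rw [← this]
    exact Finset.sum_congr rfl fun x _ => mul_comm _ _
  have hWWt : W * Wᵀ = 1 := mul_eq_one_comm.mp hWtW
  -- the block projections
  set P : Fin C → Matrix (Fin N) (Fin N) ℝ :=
    fun i => Matrix.diagonal (fun s => if (e.symm s).1 = i then 1 else 0) with hP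
  have hPsum : ∑ i, P i = 1 := by
    ext s t
    simp only [Matrix.sum_apply, hP, Matrix.diagonal, Matrix.of_apply, Matrix.one_apply]
    split_ifs with h
    · subst h; simp
    · simp [h]
  have hPmul : ∀ i j, P i * P j = if i = j then P i else 0 := by
    intro i j
    rw [hP]
    simp only
    rw [Matrix.diagonal_mul_diagonal]
    by_cases h : i = j
    · subst h
      rw [if_pos rfl]
      ext s t
      rcases eq_or_ne (e.symm s).1 i with hs | hs <;>
        simp [Matrix.diagonal_apply, hs]
    · rw [if_neg h]
      ext s t
      rw [Matrix.diagonal_apply, Matrix.zero_apply]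
      split_ifs <;> simp_all
  -- the real projections
  set Qr : Fin C → Matrix (Fin N) (Fin N) ℝ := fun i => Wᵀ * P i * W with hQr
  have hQrsymm : ∀ i, (Qr i)ᵀ = Qr i := by
    intro i
    rw [hQr]
    simp only [Matrix.transpose_mul, Matrix.transpose_transpose, Matrix.diagonal_transpose, hP]
    rw [Matrix.mul_assoc]
  have hQrmul : ∀ i j, Qr i * Qr j = if i = j then Qr i else 0 := by
    intro i j
    have : Qr i * Qr j = Wᵀ * (P i * P j) * W := by
      rw [hQr]
      simp only
      calc Wᵀ * P i * W * (Wᵀ * P j * W) = Wᵀ * P i * (W * Wᵀ) * P j * W := by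
            noncomm_ring
        _ = Wᵀ * (P i * P j) * W := by rw [hWWt]; noncomm_ring
    rw [this, hPmul]
    split_ifs
    · rw [hQr]
    · simp
  have hQrsum : ∑ i, Qr i = 1 := by
    have : ∑ i, Qr i = Wᵀ * (∑ i, P i) * W := by
      rw [Finset.mul_sum, Finset.sum_mul]
    rw [this, hPsum, Matrix.mul_one, hWtW]
  -- the corner
  have hWcol : ∀ (a : Fin D) (s : Fin N), W s (Fin.castLE hDN a) = v a s := by
    intro a s
    have h1 : ((Fin.castLE hDN a : Fin N) : ℕ) < D := a.2
    have h2 := hb (Fin.castLE hDN a) h1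
    have h3 : vf (Fin.castLE hDN a) = v a := by
      simp only [hvf]
      rw [dif_pos h1]
      congr 1
    show b (Fin.castLE hDN a) s = v a s
    rw [h2, h3]
  have hQrcorner : ∀ (i : Fin C) (a b' : Fin D),
      ((Qr i (Fin.castLE hDN a) (Fin.castLE hDN b') : ℝ) : ℂ) = E i a b' := by
    intro i a b'
    have hexp : Qr i (Fin.castLE hDN a) (Fin.castLE hDN b')
        = ∑ s : Fin N, (if (e.symm s).1 = i then 1 else 0) * v a s * v b' s := by
      rw [hQr]
      simp only
      rw [Matrix.mul_assoc, Matrix.mul_apply]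
      refine Finset.sum_congr rfl fun s _ => ?_
      rw [Matrix.transpose_apply, hWcol, hP, Matrix.diagonal_mul, hWcol]
      ring
    rw [hexp]
    have : (∑ s : Fin N, (if (e.symm s).1 = i then 1 else 0) * v a s * v b' s)
        = ∑ j : Fin D, (S i j a).re * (S i j b').re := by
      rw [← Equiv.sum_comp e]
      simp only [hv, Equiv.symm_apply_apply]
      rw [Fintype.sum_prod_type]
      rw [Finset.sum_eq_single i (fun i' _ hi' => by simp [hi'])
        (fun h => absurd (Finset.mem_univ i) h)]
      simp
    rw [this, hkey]
  -- complexify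
  refine ⟨N, hDN, fun i => (Qr i).map Complex.ofReal, ?_, ?_, ?_, ?_, ?_, ?_⟩
  · intro i
    ext s t
    simp only [Matrix.conjTranspose_apply, Matrix.map_apply, Complex.star_def,
      Complex.conj_ofReal]
    exact congrArg Complex.ofReal (congrFun (congrFun (hQrsymm i) s) t)
  · intro i
    ext s t
    simp only [Matrix.transpose_apply, Matrix.map_apply]
    exact congrArg Complex.ofReal (congrFun (congrFun (hQrsymm i) s) t)
  · intro i
    show (Qr i).map ⇑Complex.ofRealHom * (Qr i).map ⇑Complex.ofRealHom
      = (Qr i).map ⇑Complex.ofRealHom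
    rw [← Matrix.map_mul]
    have hii := hQrmul i i
    rw [if_pos rfl] at hii
    rw [hii]
  · intro i j hij
    show (Qr i).map ⇑Complex.ofRealHom * (Qr j).map ⇑Complex.ofRealHom = 0
    rw [← Matrix.map_mul]
    have hij' := hQrmul i j
    rw [if_neg hij] at hij'
    rw [hij']
    ext s t
    simp
  · show ∑ i, (Qr i).map ⇑Complex.ofRealHom = 1
    ext s t
    rw [Matrix.sum_apply, Matrix.one_apply]
    have h := congrFun (congrFun hQrsum s) t
    rw [Matrix.sum_apply, Matrix.one_apply] at h
    simp only [Matrix.map_apply, Complex.ofRealHom_eq_coe]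
    rw [← Complex.ofReal_sum, h]
    split_ifs <;> simp
  · intro i a b'
    simp only [Matrix.map_apply]
    exact hQrcorner i a b'
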